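/- Let s = 2, b_1 = 2, b_2 = 3 (so τ_1 = 2, τ_2 = 1), let y = (y_1,y_2) with y_1 = Σ_{j=1}^m 2^{−2j}, y_2 = Σ_{j=1}^m 3^{−j}, and let α_m = (1/B_{τm}) Σ_{N=1}^{B_{τm}} Δ(y, (H_2(n))_{n=ỹ_m}^{ỹ_m+N−1}). Then α_m = m^2/3 − Σ_{1 ≤ k_1,k_2 ≤ m} 1/(2 · 2^{2k_1} 3^{k_2}), and in particular |α_m| ≥ m^2/4 for every m ≥ 1. -/

import Mathlib

open Finset

open scoped Classical

/-- The radical inverse function in base `b`: `φ_b(n) = Σ_j n_j b^{-j-1}`. -/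
noncomputable def radInv (b n : ℕ) : ℝ :=
  ∑' j : ℕ, ((n / b ^ j % b : ℕ) : ℝ) / (b : ℝ) ^ (j + 1)

/-- The axis-parallel box `[0, y) = ∏_i [0, y_i)`. -/
def box {s : ℕ} (y : Fin s → ℝ) : Set (Fin s → ℝ) :=
  Set.univ.pi fun i => Set.Ico 0 (y i)

/-- The discrepancy function `Δ(y, (x_n)_{n=a}^{a+N-1})`. -/
noncomputable def disc {s : ℕ} (x : ℕ → Fin s → ℝ) (a N : ℕ) (y : Fin s → ℝ) : ℝ :=
  ∑ n ∈ Finset.Ico a (a + N),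
    ((box y).indicator (fun _ => (1 : ℝ)) (x n) - ∏ i, y i)

/-- The star discrepancy of `(x_n)_{n=a}^{a+N-1}`. -/
noncomputable def Dstar {s : ℕ} (x : ℕ → Fin s → ℝ) (a N : ℕ) : ℝ :=
  sSup {v : ℝ | ∃ y : Fin s → ℝ, (∀ i, y i ∈ Set.Ico (0 : ℝ) 1) ∧
    v = |disc x a N y| / (N : ℝ)}

/-- `(x_n)_{0 ≤ n < b^m}` is a `(t,m,s)`-net in base `b`. -/
def IsNet {s : ℕ} (b t m : ℕ) (x : ℕ → Fin s → ℝ) : Prop :=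
  (∀ n < b ^ m, ∀ i, x n i ∈ Set.Ico (0 : ℝ) 1) ∧
  ∀ d a : Fin s → ℕ, (∀ i, a i < b ^ d i) → (∑ i, d i) + t = m →
    ((Finset.range (b ^ m)).filter
      (fun n => ∀ i, x n i ∈ Set.Ico ((a i : ℝ) / b ^ d i) ((a i + 1 : ℝ) / b ^ d i))).card
      = b ^ t

/-- The `j`-th `b`-adic digit (`j ≥ 1`) of a real number `x ∈ [0,1)`. -/
noncomputable def bdigit (b : ℕ) (x : ℝ) (j : ℕ) : ℕ := (⌊x * (b : ℝ) ^ j⌋ % (b : ℤ)).toNat % b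

/-- The `b`-adic absolute valuation `‖x‖_b = b^{-(k+1)}` where the digits
`x_1, …, x_k` vanish and `x_{k+1} ≠ 0`; it is `0` when all digits vanish. -/
noncomputable def bval (b : ℕ) (x : ℝ) : ℝ :=
  if h : ∃ j, 1 ≤ j ∧ bdigit b x j ≠ 0 then
    (1 : ℝ) / (b : ℝ) ^ sInf {j | 1 ≤ j ∧ bdigit b x j ≠ 0}
  else 0

/-- The `b`-adic absolute valuation of a vector, `‖x‖_b = ∏_j ‖x^{(j)}‖_b`. -/
noncomputable def bvalVec {s : ℕ} (b : ℕ) (x : Fin s → ℝ) : ℝ := ∏ i, bval b (x i)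

/-- Digitwise subtraction modulo `b`: `x ⊖ σ`. -/
noncomputable def bsub (b : ℕ) (x σ : ℝ) : ℝ :=
  ∑' j : ℕ, (((bdigit b x (j + 1) + b - bdigit b σ (j + 1)) % b : ℕ) : ℝ) / (b : ℝ) ^ (j + 1)

/-- Digitwise addition modulo `b`: `x ⊕ σ`. -/
noncomputable def badd (b : ℕ) (x σ : ℝ) : ℝ :=
  ∑' j : ℕ, (((bdigit b x (j + 1) + bdigit b σ (j + 1)) % b : ℕ) : ℝ) / (b : ℝ) ^ (j + 1)

/-- A `b^m`-point set in `[0,1)^s` is `d`-admissible in base `b`. -/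
def IsAdmissible {s : ℕ} (b m : ℕ) (d : ℤ) (x : ℕ → Fin s → ℝ) : Prop :=
  ∀ k n : ℕ, k < n → n < b ^ m →
    bvalVec b (fun i => bsub b (x n i) (x k i)) > (b : ℝ) ^ (-((m : ℤ) + d))

/-- The two-dimensional Halton sequence in bases `2` and `3`. -/
noncomputable def H23 : ℕ → Fin 2 → ℝ := fun n => ![radInv 2 n, radInv 3 n]

/-- `ytil` is the quantity `ỹ_m` for the Halton sequence in bases `2` and `3`
(so that `τ₁ = 2`, `τ₂ = 1`). -/
def IsYtilde (m ytil : ℕ) : Prop :=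
  ytil < 2 ^ (2 * (m + 1)) * 3 ^ (m + 1) ∧
  ∃ M₁ M₂ : ℤ,
    M₁ * 3 ^ (m + 1) ≡ 1 [ZMOD (2 : ℤ) ^ (2 * (m + 1))] ∧
    M₂ * 2 ^ (2 * (m + 1)) ≡ 1 [ZMOD (3 : ℤ) ^ (m + 1)] ∧
    (ytil : ℤ) ≡ M₁ * 3 ^ (m + 1) * (∑ j ∈ Finset.Icc 1 (m + 1), (2 : ℤ) ^ (2 * j - 1))
        + M₂ * 2 ^ (2 * (m + 1)) * (∑ j ∈ Finset.Icc 1 (m + 1), (3 : ℤ) ^ (j - 1))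
      [ZMOD (2 : ℤ) ^ (2 * (m + 1)) * 3 ^ (m + 1)]

lemma radInv_term_zero (b n : ℕ) (hb : 2 ≤ b) {j : ℕ} (hj : n ≤ j) :
    ((n / b ^ j % b : ℕ) : ℝ) / (b : ℝ) ^ (j + 1) = 0 := by
  have h1 : n < b ^ j :=
    lt_of_lt_of_le (lt_of_lt_of_le (Nat.lt_two_pow_self (n := n))
      (Nat.pow_le_pow_right (by norm_num) hj)) (Nat.pow_le_pow_left hb j)
  rw [Nat.div_eq_of_lt h1]; simp

lemma radInv_eq_sum (b n : ℕ) (hb : 2 ≤ b) : radInv b n = ∑ j ∈ range (n+1),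
    ((n / b ^ j % b : ℕ) : ℝ) / (b : ℝ) ^ (j + 1) := by
  refine tsum_eq_sum fun j hj => radInv_term_zero b n hb ?_
  simp at hj; omega

lemma radInv_nonneg (b n : ℕ) : 0 ≤ radInv b n :=
  tsum_nonneg fun j => by positivity

lemma radInv_zero (b : ℕ) : radInv b 0 = 0 := by
  simp [radInv]

lemma radInv_rec (b : ℕ) (hb : 2 ≤ b) (n : ℕ) :
    radInv b n = ((n % b : ℕ) : ℝ) / b + radInv b (n / b) / b := by
  have h1 : radInv b n = ∑ j ∈ range (n+1+1),
      ((n / b ^ j % b : ℕ) : ℝ) / (b : ℝ) ^ (j + 1) := by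
    refine tsum_eq_sum fun j hj => radInv_term_zero b n hb ?_
    simp at hj; omega
  rw [h1, Finset.sum_range_succ', radInv_eq_sum _ _ hb]
  have h2 : ∀ j : ℕ, n / b ^ (j+1) = (n / b) / b ^ j := by
    intro j; rw [Nat.div_div_eq_div_mul, ← pow_succ']
  have hb0 : (0:ℝ) < b := by positivity
  have key : ∀ j ∈ range (n+1), ((n / b ^ (j+1) % b : ℕ) : ℝ) / (b:ℝ) ^ (j+1+1)
      = (((n/b) / b ^ j % b : ℕ) : ℝ) / (b:ℝ) ^ (j+1) / b := by
    intro j _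
    rw [h2 j]; ring
  rw [Finset.sum_congr rfl key, ← Finset.sum_div]
  have h3 : ∑ j ∈ range (n+1), (((n/b) / b ^ j % b : ℕ) : ℝ) / (b:ℝ) ^ (j+1)
      = ∑ j ∈ range (n/b+1), (((n/b) / b ^ j % b : ℕ) : ℝ) / (b:ℝ) ^ (j+1) := by
    refine (Finset.sum_subset ?_ ?_).symm
    · intro j hj; simp at hj ⊢
      have := Nat.div_le_self n b; omega
    · intro j _ hj; simp at hj
      exact radInv_term_zero b (n/b) hb (by omega)
  rw [h3]
  simp [pow_zero]
  ring

lemma radInv_lt_one (b : ℕ) (hb : 2 ≤ b) : ∀ n, radInv b n < 1 := by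
  intro n
  induction n using Nat.strong_induction_on with
  | _ n ih =>
    rcases Nat.eq_zero_or_pos n with h | h
    · rw [h, radInv_zero]; norm_num
    · have hd : n / b < n := Nat.div_lt_self h (by omega)
      have ihd := ih (n/b) hd
      have hnn := radInv_nonneg b (n/b)
      rw [radInv_rec b hb n]
      have h2 : (n % b) + 1 ≤ b := Nat.mod_lt n (by omega)
      have h1' : ((n % b : ℕ) : ℝ) + 1 ≤ (b:ℝ) := by exact_mod_cast h2
      have hb0 : (0:ℝ) < b := by positivity
      rw [← add_div, div_lt_one hb0]
      linarith

noncomputable def Y4 (m : ℕ) : ℝ := ∑ j ∈ range m, ((4:ℝ)^(j+1))⁻¹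

noncomputable def Y3 (m : ℕ) : ℝ := ∑ j ∈ range m, ((3:ℝ)^(j+1))⁻¹

def e2 (k : ℕ) : ℕ := ∑ j ∈ range k, 2^(2*j+1)

def f3 (k : ℕ) : ℕ := ∑ j ∈ range k, 3^j

lemma Y4_succ (m : ℕ) : Y4 (m+1) = 4⁻¹ + Y4 m / 4 := by
  rw [Y4, Finset.sum_range_succ', Y4, Finset.sum_div, add_comm]
  congr 1
  · norm_num
  · refine Finset.sum_congr rfl fun j _ => ?_
    rw [show j+1+1 = (j+1)+1 from rfl, pow_succ]
    ring

lemma Y3_succ (m : ℕ) : Y3 (m+1) = 3⁻¹ + Y3 m / 3 := by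
  rw [Y3, Finset.sum_range_succ', Y3, Finset.sum_div, add_comm]
  congr 1
  · norm_num
  · refine Finset.sum_congr rfl fun j _ => ?_
    rw [show j+1+1 = (j+1)+1 from rfl, pow_succ]
    ring

lemma Y4_nonneg (m : ℕ) : 0 ≤ Y4 m := Finset.sum_nonneg fun j _ => by positivity

lemma Y3_nonneg (m : ℕ) : 0 ≤ Y3 m := Finset.sum_nonneg fun j _ => by positivity

lemma Y4_le (m : ℕ) : Y4 m ≤ 1/3 := by
  induction m with
  | zero => rw [Y4]; norm_num
  | succ m ih => rw [Y4_succ]; linarith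

lemma Y3_le (m : ℕ) : Y3 m ≤ 1/2 := by
  induction m with
  | zero => rw [Y3]; norm_num
  | succ m ih => rw [Y3_succ]; linarith

lemma e2_succ (k : ℕ) : e2 (k+1) = 2 + 4 * e2 k := by
  rw [e2, Finset.sum_range_succ', e2, Finset.mul_sum, add_comm]
  congr 1
  exact Finset.sum_congr rfl fun j _ => by ring

lemma f3_succ (k : ℕ) : f3 (k+1) = 1 + 3 * f3 k := by
  rw [f3, Finset.sum_range_succ', f3, Finset.mul_sum, add_comm]
  congr 1
  exact Finset.sum_congr rfl fun j _ => by ring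

lemma e2_lt (k : ℕ) : e2 k < 4^k := by
  induction k with
  | zero => simp [e2]
  | succ k ih => rw [e2_succ, pow_succ]; omega

lemma f3_lt (k : ℕ) : f3 k < 3^k := by
  induction k with
  | zero => simp [f3]
  | succ k ih => rw [f3_succ, pow_succ]; omega

lemma e2_even (k : ℕ) : 2 ∣ e2 k := by
  cases k with
  | zero => simp [e2]
  | succ k => rw [e2_succ]; omega

lemma e2_zero : e2 0 = 0 := by simp [e2]

lemma f3_zero : f3 0 = 0 := by simp [f3]

lemma L2 (m : ℕ) : ∀ n : ℕ, radInv 2 n < Y4 m ↔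
    ∃ k, 1 ≤ k ∧ k ≤ m ∧ n % 4^k = e2 (k-1) := by
  induction m with
  | zero =>
    intro n
    rw [Y4]
    simp only [range_zero, Finset.sum_empty]
    constructor
    · intro h; exact absurd h (not_lt.2 (radInv_nonneg 2 n))
    · rintro ⟨k, h1, h2, -⟩; omega
  | succ m ih =>
    intro n
    have hrec : radInv 2 n = ((n % 2 : ℕ):ℝ)/2 + ((n/2 % 2 : ℕ):ℝ)/4 + radInv 2 (n/4) / 4 := by
      rw [radInv_rec 2 le_rfl n, radInv_rec 2 le_rfl (n/2), Nat.div_div_eq_div_mul]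
      norm_num
      ring
    rw [Y4_succ]
    have h4 : n % 4 < 4 := Nat.mod_lt n (by norm_num)
    have hnn4 := radInv_nonneg 2 (n/4)
    have hlt4 := radInv_lt_one 2 le_rfl (n/4)
    have hY := Y4_le m
    have hYn := Y4_nonneg m
    have hsplit : ∀ k : ℕ, 1 ≤ k →
        (n % 4^(k+1) = e2 k ↔ n % 4 + 4 * (n/4 % 4^k) = 2 + 4 * e2 (k-1)) := by
      intro k hk
      have hmm : n % 4^(k+1) = n % 4 + 4 * (n/4 % 4^k) := by
        rw [pow_succ']; exact Nat.mod_mul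
      rw [hmm]
      obtain ⟨k', rfl⟩ : ∃ k', k = k' + 1 := ⟨k-1, by omega⟩
      rw [e2_succ]
      simp
    interval_cases h4' : (n % 4)
    · have he : n % 2 = 0 ∧ n / 2 % 2 = 0 := by omega
      constructor
      · intro _
        exact ⟨1, le_rfl, by omega, by simpa [e2_zero] using h4'⟩
      · intro _
        rw [hrec, he.1, he.2]
        simp only [Nat.cast_zero]
        have : radInv 2 (n/4) / 4 < 4⁻¹ := by linarith
        linarith
    · have he : n % 2 = 1 := by omega
      constructor
      · intro h
        rw [hrec, he] at h
        have hnn : ((n/2 % 2 : ℕ):ℝ) ≥ 0 := by positivity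
        norm_num at h
        linarith
      · rintro ⟨k, hk1, hk2, hk3⟩
        have hdvd : n % 4^k % 2 = n % 2 := by
          apply Nat.mod_mod_of_dvd
          calc (2:ℕ) ∣ 4^1 := by norm_num
          _ ∣ 4^k := pow_dvd_pow 4 hk1
        have := e2_even (k-1)
        omega
    · have he : n % 2 = 0 ∧ n / 2 % 2 = 1 := by omega
      have hlhs : radInv 2 n < 4⁻¹ + Y4 m / 4 ↔ radInv 2 (n/4) < Y4 m := by
        rw [hrec, he.1, he.2]
        norm_num
        constructor <;> intro <;> linarith
      rw [hlhs, ih (n/4)]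
      constructor
      · rintro ⟨k, hk1, hk2, hk3⟩
        refine ⟨k+1, by omega, by omega, ?_⟩
        show n % 4^(k+1) = e2 k
        rw [hsplit k hk1]
        omega
      · rintro ⟨k, hk1, hk2, hk3⟩
        rcases eq_or_lt_of_le hk1 with h1 | h1
        · exfalso
          rw [← h1] at hk3
          simp [e2_zero] at hk3
          omega
        · obtain ⟨k', rfl⟩ : ∃ k', k = k' + 1 := ⟨k-1, by omega⟩
          have hk'1 : 1 ≤ k' := by omega
          rw [show k'+1-1 = k' from rfl] at hk3
          rw [hsplit k' hk'1] at hk3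
          exact ⟨k', hk'1, by omega, by omega⟩
    · have he : n % 2 = 1 := by omega
      constructor
      · intro h
        rw [hrec, he] at h
        have hnn : ((n/2 % 2 : ℕ):ℝ) ≥ 0 := by positivity
        norm_num at h
        linarith
      · rintro ⟨k, hk1, hk2, hk3⟩
        have hdvd : n % 4^k % 2 = n % 2 := by
          apply Nat.mod_mod_of_dvd
          calc (2:ℕ) ∣ 4^1 := by norm_num
          _ ∣ 4^k := pow_dvd_pow 4 hk1
        have := e2_even (k-1)
        omega

lemma L3 (m : ℕ) : ∀ n : ℕ, radInv 3 n < Y3 m ↔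
    ∃ k, 1 ≤ k ∧ k ≤ m ∧ n % 3^k = f3 (k-1) := by
  induction m with
  | zero =>
    intro n
    rw [Y3]
    simp only [range_zero, Finset.sum_empty]
    constructor
    · intro h; exact absurd h (not_lt.2 (radInv_nonneg 3 n))
    · rintro ⟨k, h1, h2, -⟩; omega
  | succ m ih =>
    intro n
    have hrec : radInv 3 n = ((n % 3 : ℕ):ℝ)/3 + radInv 3 (n/3) / 3 :=
      radInv_rec 3 (by norm_num) n
    rw [Y3_succ]
    have h3 : n % 3 < 3 := Nat.mod_lt n (by norm_num)
    have hnn3 := radInv_nonneg 3 (n/3)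
    have hlt3 := radInv_lt_one 3 (by norm_num) (n/3)
    have hY := Y3_le m
    have hYn := Y3_nonneg m
    have hsplit : ∀ k : ℕ, 1 ≤ k →
        (n % 3^(k+1) = f3 k ↔ n % 3 + 3 * (n/3 % 3^k) = 1 + 3 * f3 (k-1)) := by
      intro k hk
      have hmm : n % 3^(k+1) = n % 3 + 3 * (n/3 % 3^k) := by
        rw [pow_succ']; exact Nat.mod_mul
      rw [hmm]
      obtain ⟨k', rfl⟩ : ∃ k', k = k' + 1 := ⟨k-1, by omega⟩
      rw [f3_succ]
      simp
    interval_cases h3' : (n % 3)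
    · constructor
      · intro _
        exact ⟨1, le_rfl, by omega, by simpa [f3_zero] using h3'⟩
      · intro _
        rw [hrec]
        norm_num
        linarith
    · have hlhs : radInv 3 n < 3⁻¹ + Y3 m / 3 ↔ radInv 3 (n/3) < Y3 m := by
        rw [hrec]
        norm_num
        constructor <;> intro <;> linarith
      rw [hlhs, ih (n/3)]
      constructor
      · rintro ⟨k, hk1, hk2, hk3⟩
        refine ⟨k+1, by omega, by omega, ?_⟩
        show n % 3^(k+1) = f3 k
        rw [hsplit k hk1]
        omega
      · rintro ⟨k, hk1, hk2, hk3⟩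
        rcases eq_or_lt_of_le hk1 with h1 | h1
        · exfalso
          rw [← h1] at hk3
          simp [f3_zero] at hk3
          omega
        · obtain ⟨k', rfl⟩ : ∃ k', k = k' + 1 := ⟨k-1, by omega⟩
          have hk'1 : 1 ≤ k' := by omega
          rw [show k'+1-1 = k' from rfl] at hk3
          rw [hsplit k' hk'1] at hk3
          exact ⟨k', hk'1, by omega, by omega⟩
    · constructor
      · intro h
        rw [hrec] at h
        norm_num at h
        linarith
      · rintro ⟨k, hk1, hk2, hk3⟩
        have hdvd : n % 3^k % 3 = n % 3 := Nat.mod_mod_of_dvd n (dvd_pow_self 3 (by omega))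
        have hf : ∀ j, f3 j % 3 ≤ 1 := by
          intro j
          cases j with
          | zero => simp [f3_zero]
          | succ j => rw [f3_succ]; omega
        have := hf (k-1)
        omega

lemma four_pow (k : ℕ) : (4:ℕ)^k = 2^(2*k) := by
  rw [show (4:ℕ) = 2^2 from rfl, ← pow_mul]

lemma mod_shift {a u r Q : ℕ} (h1 : a + u < Q) (hu : 0 < u) (hr : r < Q) :
    ((a + u + r) % Q = a ↔ r = Q - u) := by
  rcases Nat.lt_or_ge (a + u + r) Q with h | h
  · rw [Nat.mod_eq_of_lt h]; omega
  · rw [Nat.mod_eq_sub_mod h, Nat.mod_eq_of_lt (by omega)]; omega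

lemma shift2 (ytil : ℕ) {k : ℕ} (hk : 1 ≤ k) (h : ytil % 4^k = e2 k) (ℓ : ℕ) :
    ((ytil + ℓ) % 4^k = e2 (k-1) ↔ ℓ % 4^k = 2^(2*k-1)) := by
  obtain ⟨k', rfl⟩ : ∃ k', k = k' + 1 := ⟨k-1, by omega⟩
  have hQ : (0:ℕ) < 4^(k'+1) := by positivity
  have he : e2 (k'+1) = e2 k' + 2^(2*k'+1) := Finset.sum_range_succ _ _
  have hau : e2 k' + 2^(2*k'+1) < 4^(k'+1) := by
    have h1 := e2_lt k'
    have h2 : (4:ℕ)^(k'+1) = 2 * 2^(2*k'+1) := by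
      rw [four_pow, show 2*(k'+1) = (2*k'+1)+1 by omega, pow_succ]
      ring
    have h3 : (4:ℕ)^k' ≤ 2^(2*k'+1) := by
      rw [four_pow]
      exact Nat.pow_le_pow_right (by norm_num) (by omega)
    omega
  rw [show (k'+1)-1 = k' from rfl]
  rw [Nat.add_mod ytil ℓ, h, he]
  rw [mod_shift hau (by positivity) (Nat.mod_lt _ hQ)]
  have hsub : 4^(k'+1) - 2^(2*k'+1) = 2^(2*(k'+1)-1) := by
    have h2 : (4:ℕ)^(k'+1) = 2 * 2^(2*k'+1) := by
      rw [four_pow, show 2*(k'+1) = (2*k'+1)+1 by omega, pow_succ]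
      ring
    rw [h2, show 2*(k'+1)-1 = 2*k'+1 by omega]
    omega
  rw [hsub]

lemma shift3 (ytil : ℕ) {k : ℕ} (hk : 1 ≤ k) (h : ytil % 3^k = f3 k) (ℓ : ℕ) :
    ((ytil + ℓ) % 3^k = f3 (k-1) ↔ ℓ % 3^k = 2 * 3^(k-1)) := by
  obtain ⟨k', rfl⟩ : ∃ k', k = k' + 1 := ⟨k-1, by omega⟩
  have hQ : (0:ℕ) < 3^(k'+1) := by positivity
  have he : f3 (k'+1) = f3 k' + 3^k' := Finset.sum_range_succ _ _
  have hau : f3 k' + 3^k' < 3^(k'+1) := by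
    have h1 := f3_lt k'
    have h2 : (3:ℕ)^(k'+1) = 3 * 3^k' := by rw [pow_succ]; ring
    omega
  rw [show (k'+1)-1 = k' from rfl]
  rw [Nat.add_mod ytil ℓ, h, he]
  rw [mod_shift hau (by positivity) (Nat.mod_lt _ hQ)]
  have hsub : 3^(k'+1) - 3^k' = 2 * 3^k' := by
    have h2 : (3:ℕ)^(k'+1) = 3 * 3^k' := by rw [pow_succ]; ring
    omega
  rw [hsub]

lemma crt {k1 k2 : ℕ} (h1 : 1 ≤ k1) (h2 : 1 ≤ k2) (ℓ : ℕ) :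
    (ℓ % 4^k1 = 2^(2*k1-1) ∧ ℓ % 3^k2 = 2*3^(k2-1)) ↔
    ℓ % (4^k1 * 3^k2) = 2^(2*k1-1) * 3^(k2-1) := by
  set c := 2^(2*k1-1) * 3^(k2-1) with hc
  have hlt1 : (2:ℕ)^(2*k1-1) < 4^k1 := by
    rw [four_pow]
    exact Nat.pow_lt_pow_right (by norm_num) (by omega)
  have hlt2 : 2 * 3^(k2-1) < 3^k2 := by
    have : (3:ℕ)^k2 = 3 * 3^(k2-1) := by
      rw [← pow_succ']
      congr 1
      omega
    have h3 : (0:ℕ) < 3^(k2-1) := by positivity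
    omega
  have hc1 : c % 4^k1 = 2^(2*k1-1) := by
    obtain ⟨u, hu⟩ : ∃ u, (3:ℕ)^(k2-1) = 2*u + 1 := by
      have h : Odd ((3:ℕ)^(k2-1)) := Odd.pow (by decide)
      obtain ⟨u, hu⟩ := h
      exact ⟨u, by omega⟩
    have hp : (2:ℕ)^(2*k1-1) * 2 = 4^k1 := by
      rw [four_pow, ← pow_succ]
      congr 1
      omega
    have hceq : c = 4^k1 * u + 2^(2*k1-1) := by
      rw [hc, hu, ← hp]
      ring
    rw [hceq, Nat.mul_add_mod, Nat.mod_eq_of_lt hlt1]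
  have hc2 : c % 3^k2 = 2 * 3^(k2-1) := by
    obtain ⟨v, hv⟩ : ∃ v, (4:ℕ)^(k1-1) = 3*v + 1 := by
      have h : (3:ℕ) ∣ 4^(k1-1) - 1 := by
        have := Nat.sub_dvd_pow_sub_pow 4 1 (k1-1)
        simpa using this
      have h4 : 1 ≤ (4:ℕ)^(k1-1) := Nat.one_le_pow _ _ (by norm_num)
      obtain ⟨v, hv⟩ := h
      exact ⟨v, by omega⟩
    have h2k : (2:ℕ)^(2*k1-1) = 2 * 4^(k1-1) := by
      rw [four_pow, ← pow_succ']
      congr 1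
      omega
    have h3k : (3:ℕ)^k2 = 3 * 3^(k2-1) := by
      rw [← pow_succ']
      congr 1
      omega
    have hceq : c = 3^k2 * (2*v) + 2 * 3^(k2-1) := by
      rw [hc, h2k, hv, h3k]
      ring
    rw [hceq, Nat.mul_add_mod, Nat.mod_eq_of_lt hlt2]
  have hcop : Nat.Coprime (4^k1) (3^k2) :=
    Nat.Coprime.pow _ _ (by norm_num)
  have e1 : (ℓ % 4^k1 = 2^(2*k1-1)) ↔ ℓ ≡ c [MOD 4^k1] := by
    unfold Nat.ModEq
    rw [hc1]
  have e2' : (ℓ % 3^k2 = 2*3^(k2-1)) ↔ ℓ ≡ c [MOD 3^k2] := by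
    unfold Nat.ModEq
    rw [hc2]
  have hclt : c < 4^k1 * 3^k2 := by
    apply Nat.mul_lt_mul_of_lt_of_le hlt1 (le_of_lt ?_) (by positivity)
    calc (3:ℕ)^(k2-1) ≤ 2 * 3^(k2-1) := by omega
    _ < 3^k2 := hlt2
  have e3 : (ℓ % (4^k1*3^k2) = c) ↔ ℓ ≡ c [MOD 4^k1*3^k2] := by
    unfold Nat.ModEq
    rw [Nat.mod_eq_of_lt hclt]
  rw [e1, e2', e3, Nat.modEq_and_modEq_iff_modEq_mul hcop]

lemma uniq2 {k k' ℓ : ℕ} (h1 : 1 ≤ k) (hkk : k < k')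
    (ha : ℓ % 4^k = 2^(2*k-1)) (hb : ℓ % 4^k' = 2^(2*k'-1)) : False := by
  have hd : ℓ % 4^k = (ℓ % 4^k') % 4^k := (Nat.mod_mod_of_dvd ℓ (pow_dvd_pow 4 hkk.le)).symm
  rw [hb] at hd
  have hdvd : (4:ℕ)^k ∣ 2^(2*k'-1) := by
    rw [four_pow]
    exact pow_dvd_pow 2 (by omega)
  obtain ⟨w, hw⟩ := hdvd
  rw [hw, Nat.mul_mod_right] at hd
  have : (0:ℕ) < 2^(2*k-1) := by positivity
  omega

lemma uniq3 {k k' ℓ : ℕ} (h1 : 1 ≤ k) (hkk : k < k')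
    (ha : ℓ % 3^k = 2*3^(k-1)) (hb : ℓ % 3^k' = 2*3^(k'-1)) : False := by
  have hd : ℓ % 3^k = (ℓ % 3^k') % 3^k := (Nat.mod_mod_of_dvd ℓ (pow_dvd_pow 3 hkk.le)).symm
  rw [hb] at hd
  have hdvd : (3:ℕ)^k ∣ 2*3^(k'-1) := by
    exact Dvd.dvd.mul_left (pow_dvd_pow 3 (by omega)) 2
  obtain ⟨w, hw⟩ := hdvd
  rw [hw, Nat.mul_mod_right] at hd
  have : (0:ℕ) < 3^(k-1) := by positivity
  omega

lemma sum_ite_unique {s : Finset ℕ} {P : ℕ → Prop} [DecidablePred P]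
    (huniq : ∀ k ∈ s, ∀ k' ∈ s, P k → P k' → k = k') :
    (∑ k ∈ s, if P k then (1:ℝ) else 0) = if ∃ k ∈ s, P k then 1 else 0 := by
  by_cases h : ∃ k ∈ s, P k
  · obtain ⟨k0, hk0, hP⟩ := h
    rw [if_pos ⟨k0, hk0, hP⟩, Finset.sum_eq_single k0]
    · rw [if_pos hP]
    · intro k hk hne
      rw [if_neg]
      intro hPk
      exact hne (huniq k hk k0 hk0 hPk hP)
    · intro h'
      exact absurd hk0 h'
  · rw [if_neg h]
    refine Finset.sum_eq_zero fun k hk => ?_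
    rw [if_neg]
    intro hP
    exact h ⟨k, hk, hP⟩

lemma sum_filter_mod {M c : ℕ} (hM : 0 < M) (hc : c < M) (f : ℕ → ℝ) (q : ℕ) :
    ∑ ℓ ∈ range (q*M), (if ℓ % M = c then f ℓ else 0) = ∑ j ∈ range q, f (j*M + c) := by
  induction q with
  | zero => simp
  | succ q ih =>
    have h1 : (q+1)*M = q*M + M := by ring
    rw [h1, Finset.range_eq_Ico,
      ← Finset.sum_Ico_consecutive _ (Nat.zero_le (q*M)) (Nat.le_add_right (q*M) M),
      ← Finset.range_eq_Ico, ih, Finset.sum_Ico_eq_sum_range]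
    simp only [Nat.add_sub_cancel_left]
    have h2 : ∀ i ∈ range M, (if (q*M + i) % M = c then f (q*M + i) else 0)
        = (if i = c then f (q*M + i) else 0) := by
      intro i hi
      simp only [Finset.mem_range] at hi
      have : (q*M + i) % M = i := by
        rw [add_comm, Nat.add_mul_mod_self_right, Nat.mod_eq_of_lt hi]
      rw [this]
    rw [Finset.sum_congr rfl h2, Finset.sum_ite_eq' (range M) c (fun i => f (q*M + i)),
      if_pos (Finset.mem_range.2 hc), Finset.sum_range_succ]

lemma e2_cast (K : ℕ) : ((e2 K : ℤ)) = ∑ j ∈ Finset.Icc 1 K, (2:ℤ)^(2*j-1) := by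
  rw [show Finset.Icc 1 K = Finset.Ico 1 (K+1) by rw [Finset.Ico_add_one_right_eq_Icc],
    Finset.sum_Ico_eq_sum_range]
  push_cast [e2]
  refine Finset.sum_congr rfl fun j _ => ?_
  congr 1
  omega

lemma f3_cast (K : ℕ) : ((f3 K : ℤ)) = ∑ j ∈ Finset.Icc 1 K, (3:ℤ)^(j-1) := by
  rw [show Finset.Icc 1 K = Finset.Ico 1 (K+1) by rw [Finset.Ico_add_one_right_eq_Icc],
    Finset.sum_Ico_eq_sum_range]
  push_cast [f3]
  refine Finset.sum_congr rfl fun j _ => ?_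
  congr 1
  omega

lemma e2_mod (k K : ℕ) (h : k ≤ K) : e2 K % 4^k = e2 k % 4^k := by
  induction K with
  | zero => have : k = 0 := by omega
            subst this; rfl
  | succ K ih =>
    rcases Nat.lt_or_ge k (K+1) with h1 | h1
    · have h2 : e2 (K+1) = e2 K + 2^(2*K+1) := Finset.sum_range_succ _ _
      have h3 : (4:ℕ)^k ∣ 2^(2*K+1) := by
        have : (4:ℕ)^k = 2^(2*k) := by rw [pow_mul]; norm_num
        rw [this]
        exact pow_dvd_pow 2 (by omega)
      obtain ⟨c, hc⟩ := h3
      rw [h2, hc, Nat.add_mul_mod_self_left]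
      exact ih (by omega)
    · have : k = K+1 := by omega
      subst this; rfl

lemma f3_mod (k K : ℕ) (h : k ≤ K) : f3 K % 3^k = f3 k % 3^k := by
  induction K with
  | zero => have : k = 0 := by omega
            subst this; rfl
  | succ K ih =>
    rcases Nat.lt_or_ge k (K+1) with h1 | h1
    · have h2 : f3 (K+1) = f3 K + 3^K := Finset.sum_range_succ _ _
      obtain ⟨c, hc⟩ := pow_dvd_pow 3 (show k ≤ K by omega)
      rw [h2, hc, Nat.add_mul_mod_self_left]
      exact ih (by omega)
    · have : k = K+1 := by omega
      subst this; rfl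

lemma ytil_mod4 (m ytil : ℕ) (hy : IsYtilde m ytil) {k : ℕ} (hk : k ≤ m + 1) :
    ytil % 4^k = e2 k := by
  obtain ⟨-, M₁, M₂, h1, h2, h3⟩ := hy
  have hpow : ((2:ℤ)) ^ (2*(m+1)) = 4 ^ (m+1) := by rw [pow_mul]; norm_num
  set E : ℤ := ∑ j ∈ Finset.Icc 1 (m + 1), (2:ℤ)^(2*j-1) with hE
  set F : ℤ := ∑ j ∈ Finset.Icc 1 (m + 1), (3:ℤ)^(j-1) with hF
  have h4 : (ytil : ℤ) ≡ M₁ * 3^(m+1) * E + M₂ * 2^(2*(m+1)) * F [ZMOD (2:ℤ)^(2*(m+1))] :=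
    h3.of_dvd ⟨3^(m+1), rfl⟩
  have h5 : M₂ * 2^(2*(m+1)) * F ≡ 0 [ZMOD (2:ℤ)^(2*(m+1))] :=
    (Int.modEq_zero_iff_dvd).2 ⟨M₂ * F, by ring⟩
  have h6 : M₁ * 3^(m+1) * E ≡ 1 * E [ZMOD (2:ℤ)^(2*(m+1))] := h1.mul_right E
  have h7 : (ytil : ℤ) ≡ E [ZMOD (2:ℤ)^(2*(m+1))] := by
    have := h4.trans (h6.add h5)
    simpa using this
  have h8 : (ytil : ℤ) ≡ E [ZMOD (4:ℤ)^k] := by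
    rw [hpow] at h7
    exact h7.of_dvd (pow_dvd_pow 4 hk)
  have h9 : E = (e2 (m+1) : ℤ) := (e2_cast (m+1)).symm
  rw [h9] at h8
  have h10 : (ytil : ℤ) % 4^k = (e2 (m+1) : ℤ) % 4^k := h8
  have h11 : ((ytil % 4^k : ℕ) : ℤ) = ((e2 (m+1) % 4^k : ℕ) : ℤ) := by
    push_cast
    exact_mod_cast h10
  have h12 : ytil % 4^k = e2 (m+1) % 4^k := by exact_mod_cast h11
  rw [h12, e2_mod k (m+1) hk, Nat.mod_eq_of_lt (e2_lt k)]

lemma ytil_mod3 (m ytil : ℕ) (hy : IsYtilde m ytil) {k : ℕ} (hk : k ≤ m + 1) :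
    ytil % 3^k = f3 k := by
  obtain ⟨-, M₁, M₂, h1, h2, h3⟩ := hy
  set E : ℤ := ∑ j ∈ Finset.Icc 1 (m + 1), (2:ℤ)^(2*j-1) with hE
  set F : ℤ := ∑ j ∈ Finset.Icc 1 (m + 1), (3:ℤ)^(j-1) with hF
  have h4 : (ytil : ℤ) ≡ M₁ * 3^(m+1) * E + M₂ * 2^(2*(m+1)) * F [ZMOD (3:ℤ)^(m+1)] :=
    h3.of_dvd ⟨2^(2*(m+1)), by ring⟩
  have h5 : M₁ * 3^(m+1) * E ≡ 0 [ZMOD (3:ℤ)^(m+1)] :=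
    (Int.modEq_zero_iff_dvd).2 ⟨M₁ * E, by ring⟩
  have h6 : M₂ * 2^(2*(m+1)) * F ≡ 1 * F [ZMOD (3:ℤ)^(m+1)] := h2.mul_right F
  have h7 : (ytil : ℤ) ≡ F [ZMOD (3:ℤ)^(m+1)] := by
    have := h4.trans (h5.add h6)
    simpa using this
  have h8 : (ytil : ℤ) ≡ (f3 (m+1) : ℤ) [ZMOD (3:ℤ)^k] := by
    rw [hF, ← f3_cast] at h7
    exact h7.of_dvd (pow_dvd_pow 3 hk)
  have h10 : (ytil : ℤ) % 3^k = (f3 (m+1) : ℤ) % 3^k := h8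
  have h11 : ((ytil % 3^k : ℕ) : ℤ) = ((f3 (m+1) % 3^k : ℕ) : ℤ) := by
    push_cast
    exact_mod_cast h10
  have h12 : ytil % 3^k = f3 (m+1) % 3^k := by exact_mod_cast h11
  rw [h12, f3_mod k (m+1) hk, Nat.mod_eq_of_lt (f3_lt k)]

lemma Icc_to_range (f : ℕ → ℝ) (m : ℕ) : ∑ j ∈ Icc 1 m, f j = ∑ i ∈ range m, f (1+i) := by
  rw [← Finset.Ico_add_one_right_eq_Icc, Finset.sum_Ico_eq_sum_range]
  norm_num

lemma Y4_eq_Icc (m : ℕ) : ∑ k ∈ Icc 1 m, ((4:ℝ)^k)⁻¹ = Y4 m := by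
  rw [Icc_to_range, Y4]
  exact Finset.sum_congr rfl fun i _ => by rw [show 1+i = i+1 by omega]

lemma Y3_eq_Icc (m : ℕ) : ∑ k ∈ Icc 1 m, ((3:ℝ)^k)⁻¹ = Y3 m := by
  rw [Icc_to_range, Y3]
  exact Finset.sum_congr rfl fun i _ => by rw [show 1+i = i+1 by omega]

lemma yv0_eq (m : ℕ) : ∑ j ∈ Icc 1 m, ((2:ℝ)^(2*j))⁻¹ = Y4 m := by
  rw [← Y4_eq_Icc]
  exact Finset.sum_congr rfl fun j _ => by
    rw [show (4:ℝ) = 2^2 by norm_num, ← pow_mul]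

lemma gauss_real (q : ℕ) : ∑ j ∈ range q, (j:ℝ) = (q:ℝ)*((q:ℝ)-1)/2 := by
  induction q with
  | zero => simp
  | succ q ih => rw [Finset.sum_range_succ, ih]; push_cast; ring

lemma sum_weights (T : ℕ) : ∑ i ∈ range T, ((T-i : ℕ):ℝ) = (T:ℝ)*((T:ℝ)+1)/2 := by
  rw [← Finset.sum_range_reflect]
  have h : ∀ j ∈ range T, ((T - (T-1-j) : ℕ):ℝ) = (j:ℝ)+1 := fun j hj => by
    rw [mem_range] at hj
    rw [show T - (T-1-j) = j+1 by omega]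
    push_cast; ring
  rw [Finset.sum_congr rfl h]
  have h2 := gauss_real T
  rw [Finset.sum_add_distrib, h2, Finset.sum_const, Finset.card_range, nsmul_eq_mul]
  ring

lemma box_indicator (m n : ℕ) :
    (box ![Y4 m, Y3 m]).indicator (fun _ => (1:ℝ)) (H23 n)
      = if (radInv 2 n < Y4 m ∧ radInv 3 n < Y3 m) then 1 else 0 := by
  have hmem : H23 n ∈ box ![Y4 m, Y3 m] ↔ (radInv 2 n < Y4 m ∧ radInv 3 n < Y3 m) := by
    rw [show box ![Y4 m, Y3 m] = Set.univ.pi (fun i => Set.Ico 0 ((![Y4 m, Y3 m]) i)) from rfl]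
    rw [Set.mem_univ_pi, Fin.forall_fin_two]
    simp [H23, Set.mem_Ico, radInv_nonneg]
  rw [Set.indicator_apply]
  exact if_congr hmem rfl rfl

lemma chi_eq (m ytil : ℕ)
    (h4 : ∀ k, 1 ≤ k → k ≤ m → ytil % 4^k = e2 k)
    (h3 : ∀ k, 1 ≤ k → k ≤ m → ytil % 3^k = f3 k) (ℓ : ℕ) :
    (box ![Y4 m, Y3 m]).indicator (fun _ => (1:ℝ)) (H23 (ytil + ℓ))
      = ∑ k1 ∈ Icc 1 m, ∑ k2 ∈ Icc 1 m,
          if ℓ % (4^k1 * 3^k2) = 2^(2*k1-1) * 3^(k2-1) then (1:ℝ) else 0 := by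
  rw [box_indicator]
  have hA : (radInv 2 (ytil+ℓ) < Y4 m) ↔ ∃ k ∈ Icc 1 m, ℓ % 4^k = 2^(2*k-1) := by
    rw [L2 m (ytil+ℓ)]
    constructor
    · rintro ⟨k, hk1, hk2, hk3⟩
      exact ⟨k, Finset.mem_Icc.2 ⟨hk1, hk2⟩, (shift2 ytil hk1 (h4 k hk1 hk2) ℓ).1 hk3⟩
    · rintro ⟨k, hk, hk3⟩
      obtain ⟨hk1, hk2⟩ := Finset.mem_Icc.1 hk
      exact ⟨k, hk1, hk2, (shift2 ytil hk1 (h4 k hk1 hk2) ℓ).2 hk3⟩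
  have hB : (radInv 3 (ytil+ℓ) < Y3 m) ↔ ∃ k ∈ Icc 1 m, ℓ % 3^k = 2*3^(k-1) := by
    rw [L3 m (ytil+ℓ)]
    constructor
    · rintro ⟨k, hk1, hk2, hk3⟩
      exact ⟨k, Finset.mem_Icc.2 ⟨hk1, hk2⟩, (shift3 ytil hk1 (h3 k hk1 hk2) ℓ).1 hk3⟩
    · rintro ⟨k, hk, hk3⟩
      obtain ⟨hk1, hk2⟩ := Finset.mem_Icc.1 hk
      exact ⟨k, hk1, hk2, (shift3 ytil hk1 (h3 k hk1 hk2) ℓ).2 hk3⟩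
  have hterm : ∀ k1 ∈ Icc 1 m, ∀ k2 ∈ Icc 1 m,
      (if ℓ % (4^k1*3^k2) = 2^(2*k1-1)*3^(k2-1) then (1:ℝ) else 0)
      = (if ℓ % 4^k1 = 2^(2*k1-1) then (1:ℝ) else 0)
        * (if ℓ % 3^k2 = 2*3^(k2-1) then (1:ℝ) else 0) := by
    intro k1 hk1 k2 hk2
    obtain ⟨h11, -⟩ := Finset.mem_Icc.1 hk1
    obtain ⟨h21, -⟩ := Finset.mem_Icc.1 hk2
    rw [if_congr (crt h11 h21 ℓ).symm rfl rfl]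
    by_cases hp : ℓ % 4^k1 = 2^(2*k1-1) <;> by_cases hq : ℓ % 3^k2 = 2*3^(k2-1) <;>
      simp [hp, hq]
  rw [Finset.sum_congr rfl (fun k1 hk1 =>
    Finset.sum_congr rfl (fun k2 hk2 => hterm k1 hk1 k2 hk2))]
  rw [← Finset.sum_mul_sum]
  have hu2 : ∀ k ∈ Icc 1 m, ∀ k' ∈ Icc 1 m,
      ℓ % 4^k = 2^(2*k-1) → ℓ % 4^k' = 2^(2*k'-1) → k = k' := by
    intro k hk k' hk' ha hb
    obtain ⟨hk1, -⟩ := Finset.mem_Icc.1 hk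
    obtain ⟨hk1', -⟩ := Finset.mem_Icc.1 hk'
    rcases lt_trichotomy k k' with h | h | h
    · exact absurd (uniq2 hk1 h ha hb) not_false
    · exact h
    · exact absurd (uniq2 hk1' h hb ha) not_false
  have hu3 : ∀ k ∈ Icc 1 m, ∀ k' ∈ Icc 1 m,
      ℓ % 3^k = 2*3^(k-1) → ℓ % 3^k' = 2*3^(k'-1) → k = k' := by
    intro k hk k' hk' ha hb
    obtain ⟨hk1, -⟩ := Finset.mem_Icc.1 hk
    obtain ⟨hk1', -⟩ := Finset.mem_Icc.1 hk'
    rcases lt_trichotomy k k' with h | h | h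
    · exact absurd (uniq3 hk1 h ha hb) not_false
    · exact h
    · exact absurd (uniq3 hk1' h hb ha) not_false
  rw [sum_ite_unique hu2, sum_ite_unique hu3]
  rw [if_congr (and_congr hA hB) rfl rfl]
  simp only [Finset.mem_Icc]
  by_cases hp : ∃ k, (1 ≤ k ∧ k ≤ m) ∧ ℓ % 4^k = 2^(2*k-1) <;>
    by_cases hq : ∃ k, (1 ≤ k ∧ k ≤ m) ∧ ℓ % 3^k = 2*3^(k-1) <;>
    simp [hp, hq]

lemma main_sum (m ytil : ℕ)
    (h4 : ∀ k, 1 ≤ k → k ≤ m → ytil % 4^k = e2 k)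
    (h3 : ∀ k, 1 ≤ k → k ≤ m → ytil % 3^k = f3 k) :
    ∑ N ∈ Icc 1 (2^(2*m)*3^m), disc H23 ytil N ![Y4 m, Y3 m]
      = ((2^(2*m)*3^m : ℕ):ℝ) * ((m:ℝ)^2/3 - (Y4 m * Y3 m)/2) := by
  set T : ℕ := 2^(2*m)*3^m with hT
  set P : ℝ := Y4 m * Y3 m with hP
  set χ : ℕ → ℝ := fun i => (box ![Y4 m, Y3 m]).indicator (fun _ => (1:ℝ)) (H23 (ytil + i))
    with hχ
  have hdisc : ∀ N, disc H23 ytil N ![Y4 m, Y3 m] = ∑ i ∈ range N, (χ i - P) := by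
    intro N
    have h0 : disc H23 ytil N ![Y4 m, Y3 m] = ∑ n ∈ Finset.Ico ytil (ytil+N),
        ((box ![Y4 m, Y3 m]).indicator (fun _ => (1:ℝ)) (H23 n) - ∏ i, (![Y4 m, Y3 m]) i) := rfl
    have hprod : (∏ i, (![Y4 m, Y3 m]) i) = P := by
      rw [Fin.prod_univ_two]
      simp [hP]
    rw [h0, Finset.sum_Ico_eq_sum_range]
    simp only [Nat.add_sub_cancel_left]
    exact Finset.sum_congr rfl fun i _ => by rw [hprod]
  rw [Finset.sum_congr rfl (fun N _ => hdisc N)]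
  have hswap : ∑ N ∈ Icc 1 T, ∑ i ∈ range N, (χ i - P)
      = ∑ i ∈ range T, (((T - i : ℕ):ℝ) * (χ i - P)) := by
    rw [Finset.sum_comm' (s := Icc 1 T) (t := fun N => range N) (t' := range T)
      (s' := fun i => Icc (i+1) T) (f := fun N i => χ i - P)
      (fun N i => by simp only [Finset.mem_Icc, Finset.mem_range]; omega)]
    refine Finset.sum_congr rfl fun i hi => ?_
    rw [Finset.sum_const, Nat.card_Icc, nsmul_eq_mul, show T+1-(i+1) = T-i by omega]
  rw [hswap]
  have hexpand : ∑ i ∈ range T, (((T - i : ℕ):ℝ) * (χ i - P))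
      = (∑ i ∈ range T, ((T - i : ℕ):ℝ) * χ i) - P * (∑ i ∈ range T, ((T - i:ℕ):ℝ)) := by
    rw [Finset.mul_sum, ← Finset.sum_sub_distrib]
    exact Finset.sum_congr rfl fun i _ => by ring
  rw [hexpand, sum_weights]
  have hS : (∑ i ∈ range T, ((T - i : ℕ):ℝ) * χ i)
      = ∑ k1 ∈ Icc 1 m, ∑ k2 ∈ Icc 1 m, ∑ i ∈ range T,
          (if i % (4^k1*3^k2) = 2^(2*k1-1)*3^(k2-1) then ((T-i:ℕ):ℝ) else 0) := by
    have h1 : ∀ i ∈ range T, ((T - i : ℕ):ℝ) * χ i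
        = ∑ k1 ∈ Icc 1 m, ∑ k2 ∈ Icc 1 m,
            (if i % (4^k1*3^k2) = 2^(2*k1-1)*3^(k2-1) then ((T-i:ℕ):ℝ) else 0) := by
      intro i _
      rw [hχ]
      simp only []
      rw [chi_eq m ytil h4 h3 i, Finset.mul_sum]
      refine Finset.sum_congr rfl fun k1 _ => ?_
      rw [Finset.mul_sum]
      refine Finset.sum_congr rfl fun k2 _ => ?_
      by_cases h : i % (4^k1*3^k2) = 2^(2*k1-1)*3^(k2-1) <;> simp [h]
    rw [Finset.sum_congr rfl h1, Finset.sum_comm]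
    refine Finset.sum_congr rfl fun k1 _ => ?_
    rw [Finset.sum_comm]
  rw [hS]
  have hinner : ∀ k1 ∈ Icc 1 m, ∀ k2 ∈ Icc 1 m,
      (∑ i ∈ range T, (if i % (4^k1*3^k2) = 2^(2*k1-1)*3^(k2-1) then ((T-i:ℕ):ℝ) else 0))
      = (T:ℝ)^2 * (((4:ℝ)^k1)⁻¹ * ((3:ℝ)^k2)⁻¹) / 2 + (T:ℝ)/3 := by
    intro k1 hk1 k2 hk2
    obtain ⟨h11, h12⟩ := Finset.mem_Icc.1 hk1
    obtain ⟨h21, h22⟩ := Finset.mem_Icc.1 hk2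
    set M : ℕ := 4^k1*3^k2 with hM
    set c : ℕ := 2^(2*k1-1)*3^(k2-1) with hc
    have hMpos : 0 < M := by positivity
    have hclt : c < M := by
      have hlt1 : (2:ℕ)^(2*k1-1) < 4^k1 := by
        rw [four_pow]
        exact Nat.pow_lt_pow_right (by norm_num) (by omega)
      have hlt2 : (3:ℕ)^(k2-1) < 3^k2 := Nat.pow_lt_pow_right (by norm_num) (by omega)
      exact Nat.mul_lt_mul_of_lt_of_le hlt1 (le_of_lt hlt2) (by positivity)
    set q : ℕ := 4^(m-k1)*3^(m-k2) with hq
    have hqM : q * M = T := by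
      have h41 : (4:ℕ)^(m-k1)*4^k1 = 4^m := by rw [← pow_add]; congr 1; omega
      have h31 : (3:ℕ)^(m-k2)*3^k2 = 3^m := by rw [← pow_add]; congr 1; omega
      calc q * M = (4^(m-k1)*4^k1)*(3^(m-k2)*3^k2) := by rw [hq, hM]; ring
      _ = 4^m*3^m := by rw [h41, h31]
      _ = T := by rw [hT, four_pow]
    have h6c : 6 * c = M := by
      have hp2 : 2 * (2:ℕ)^(2*k1-1) = 4^k1 := by
        rw [four_pow, ← pow_succ']
        congr 1
        omega
      have hp3 : 3 * (3:ℕ)^(k2-1) = 3^k2 := by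
        rw [← pow_succ']
        congr 1
        omega
      calc 6*c = (2*2^(2*k1-1))*(3*3^(k2-1)) := by rw [hc]; ring
      _ = M := by rw [hp2, hp3, hM]
    conv_lhs => rw [← hqM]
    rw [sum_filter_mod hMpos hclt _ q]
    have hterm : ∀ j ∈ range q, ((q*M - (j*M+c) : ℕ):ℝ)
        = (q:ℝ)*(M:ℝ) - (j:ℝ)*(M:ℝ) - (c:ℝ) := by
      intro j hj
      rw [Finset.mem_range] at hj
      have h1 : (j+1)*M ≤ q*M := Nat.mul_le_mul_right M (by omega)
      have h2 : (j+1)*M = j*M + M := by ring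
      have hlt : j*M + c < q*M := by omega
      push_cast [Nat.cast_sub (le_of_lt hlt)]
      ring
    rw [Finset.sum_congr rfl hterm, Finset.sum_sub_distrib, Finset.sum_sub_distrib,
      Finset.sum_const, Finset.sum_const, Finset.card_range, nsmul_eq_mul, nsmul_eq_mul,
      ← Finset.sum_mul, gauss_real]
    have hMr : ((M:ℕ):ℝ) = (4:ℝ)^k1 * (3:ℝ)^k2 := by rw [hM]; push_cast; ring
    have hTr : (T:ℝ) = (q:ℝ)*(M:ℝ) := by rw [← hqM]; push_cast; ring
    have h6r : 6*(c:ℝ) = (M:ℝ) := by exact_mod_cast h6c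
    have hM0 : ((M:ℕ):ℝ) ≠ 0 := by positivity
    have hinv : ((4:ℝ)^k1)⁻¹ * ((3:ℝ)^k2)⁻¹ = ((M:ℕ):ℝ)⁻¹ := by
      rw [hMr, mul_inv]
    rw [hinv, hTr]
    have expand : ((q:ℝ)*(M:ℝ))^2 * ((M:ℝ))⁻¹ / 2 = (q:ℝ)^2*(M:ℝ)/2 := by
      field_simp
    rw [expand]
    linear_combination (-(q:ℝ)/6) * h6r
  rw [Finset.sum_congr rfl (fun k1 hk1 => Finset.sum_congr rfl
    (fun k2 hk2 => hinner k1 hk1 k2 hk2))]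
  have hsum : ∑ k1 ∈ Icc 1 m, ∑ k2 ∈ Icc 1 m,
      ((T:ℝ)^2 * (((4:ℝ)^k1)⁻¹ * ((3:ℝ)^k2)⁻¹) / 2 + (T:ℝ)/3)
      = (T:ℝ)^2/2 * P + (m:ℝ)^2 * (T:ℝ)/3 := by
    have e1 : ∀ k1 ∈ Icc 1 m,
        (∑ k2 ∈ Icc 1 m, ((T:ℝ)^2 * (((4:ℝ)^k1)⁻¹ * ((3:ℝ)^k2)⁻¹) / 2 + (T:ℝ)/3))
        = (T:ℝ)^2/2 * ((4:ℝ)^k1)⁻¹ * (Y3 m) + (m:ℝ) * ((T:ℝ)/3) := by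
      intro k1 _
      rw [Finset.sum_add_distrib, Finset.sum_const, Nat.card_Icc, nsmul_eq_mul,
        show m+1-1 = m from by omega]
      congr 1
      rw [← Y3_eq_Icc, Finset.mul_sum]
      exact Finset.sum_congr rfl fun k2 _ => by ring
    rw [Finset.sum_congr rfl e1, Finset.sum_add_distrib, Finset.sum_const, Nat.card_Icc,
      nsmul_eq_mul, show m+1-1 = m from by omega]
    have e2 : ∑ k1 ∈ Icc 1 m, (T:ℝ)^2/2 * ((4:ℝ)^k1)⁻¹ * (Y3 m)
        = (T:ℝ)^2/2 * (Y4 m * Y3 m) := by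
      rw [← Y4_eq_Icc, Finset.sum_mul, Finset.mul_sum]
      exact Finset.sum_congr rfl fun k1 _ => by ring
    rw [e2, hP]
    ring
  rw [hsum]
  push_cast
  ring

/-- Lemma 4.5 for bases `2` and `3`: explicit value for `α_m` and the lower
bound `|α_m| ≥ m²/4`. -/
theorem halton23_alpha_lower_bound (m : ℕ) (hm : 1 ≤ m)
    (ytil : ℕ) (hy : IsYtilde m ytil) (α : ℝ)
    (hα : α = (1 / ((2 : ℝ) ^ (2 * m) * 3 ^ m)) *
        ∑ N ∈ Finset.Icc 1 (2 ^ (2 * m) * 3 ^ m),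
          disc H23 ytil N
            ![∑ j ∈ Finset.Icc 1 m, ((2 : ℝ) ^ (2 * j))⁻¹,
              ∑ j ∈ Finset.Icc 1 m, ((3 : ℝ) ^ j)⁻¹]) :
    α = (m : ℝ) ^ 2 / 3 -
        ∑ k₁ ∈ Finset.Icc 1 m, ∑ k₂ ∈ Finset.Icc 1 m,
          1 / (2 * (2 : ℝ) ^ (2 * k₁) * 3 ^ k₂) ∧
    |α| ≥ (m : ℝ) ^ 2 / 4 := by
  have h4 : ∀ k, 1 ≤ k → k ≤ m → ytil % 4^k = e2 k :=
    fun k _ hk => ytil_mod4 m ytil hy (by omega)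
  have h3 : ∀ k, 1 ≤ k → k ≤ m → ytil % 3^k = f3 k :=
    fun k _ hk => ytil_mod3 m ytil hy (by omega)
  rw [yv0_eq m, Y3_eq_Icc m, main_sum m ytil h4 h3] at hα
  have hTr : ((2^(2*m)*3^m : ℕ):ℝ) = (2:ℝ)^(2*m)*3^m := by push_cast; ring
  rw [hTr] at hα
  have hT0 : ((2:ℝ)^(2*m)*3^m) ≠ 0 := by positivity
  have hαval : α = (m:ℝ)^2/3 - (Y4 m * Y3 m)/2 := by
    rw [hα]
    field_simp
  have hsum2 : ∑ k₁ ∈ Finset.Icc 1 m, ∑ k₂ ∈ Finset.Icc 1 m,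
      1/(2*(2:ℝ)^(2*k₁)*3^k₂) = (Y4 m * Y3 m)/2 := by
    have hYY : (Y4 m * Y3 m) = ∑ k₁ ∈ Finset.Icc 1 m, ∑ k₂ ∈ Finset.Icc 1 m,
        ((4:ℝ)^k₁)⁻¹ * ((3:ℝ)^k₂)⁻¹ := by
      rw [← Y4_eq_Icc, ← Y3_eq_Icc, Finset.sum_mul_sum]
    rw [hYY, Finset.sum_div]
    refine Finset.sum_congr rfl fun k1 _ => ?_
    rw [Finset.sum_div]
    refine Finset.sum_congr rfl fun k2 _ => ?_
    rw [show (2:ℝ)^(2*k1) = 4^k1 by rw [show (4:ℝ)=2^2 by norm_num, ← pow_mul]]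
    have ha : (4:ℝ)^k1 ≠ 0 := by positivity
    have hb : (3:ℝ)^k2 ≠ 0 := by positivity
    field_simp
  refine ⟨by rw [hαval, hsum2], ?_⟩
  have hY4n := Y4_nonneg m
  have hY3n := Y3_nonneg m
  have hY4l := Y4_le m
  have hY3l := Y3_le m
  have hm1 : (1:ℝ) ≤ (m:ℝ) := by exact_mod_cast hm
  have hbound : (m:ℝ)^2/4 ≤ α := by
    rw [hαval]
    nlinarith
  exact le_trans hbound (le_abs_self α)
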